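/- Let $1 < p < \gamma < 2$, set $\beta = \gamma - 1$, and let $A(R), D(R)$ be positive increasing functions on $[1,\infty)$ with $D(R) \le R^\beta A(R)$. Define $F(y) = A(y)^{-\rho''} D(y)^{-\rho'}$ where $\rho' = (\beta p + 1 - p)/\beta$ and $\rho'' = (p-1)/\beta$, and suppose $\int_1^\infty F(y)\,dy < \infty$. Fix $r > 1/\rho$ where $\rho = \min(\rho', \rho'')$, and define $\tilde{D}(y) = \inf_{u \ge 1} u^r D(y/u)$ and $\tilde{A}(y) = \inf_{u \ge 1} u^r A(y/u)$, extending $D, A$ by $D(y) = D(1)$, $A(y) = A(1)$ for $0 \le y < 1$. Then $\tilde{F}(y) := \tilde{A}(y)^{-\rho''}\tilde{D}(y)^{-\rho'}$ satisfies $\int_1^\infty \tilde{F}(y)\,dy < \infty$. -/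

import Mathlib

open Set MeasureTheory Real Filter

set_option maxHeartbeats 1000000

/-- Regularization step in Theorem 9(b) of the paper: the infimal smoothings
`D̃(y) = inf_{u ≥ 1} u^r D(y/u)`, `Ã(y) = inf_{u ≥ 1} u^r A(y/u)` of the growth
functions preserve finiteness of `∫₁^∞ A^{-ρ''} D^{-ρ'}`. -/
theorem smoothing_preserves_integrability (p γ β ρ' ρ'' ρ r : ℝ)
    (hp : 1 < p) (hpγ : p < γ) (hγ : γ < 2) (hβ : β = γ - 1)
    (hρ' : ρ' = (β * p + 1 - p) / β) (hρ'' : ρ'' = (p - 1) / β)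
    (hρ : ρ = min ρ' ρ'') (hr : 1 / ρ < r)
    (D A : ℝ → ℝ)
    (hDpos : ∀ y, 0 < D y) (hApos : ∀ y, 0 < A y)
    (hDmono : ∀ y z, 1 ≤ y → y ≤ z → D y ≤ D z)
    (hAmono : ∀ y z, 1 ≤ y → y ≤ z → A y ≤ A z)
    (hDext : ∀ y : ℝ, y < 1 → D y = D 1) (hAext : ∀ y : ℝ, y < 1 → A y = A 1)
    (hDA : ∀ R : ℝ, 1 ≤ R → D R ≤ R ^ β * A R)
    (hint : MeasureTheory.IntegrableOn
      (fun y => A y ^ (-ρ'') * D y ^ (-ρ')) (Set.Ioi 1))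
    (Dt At : ℝ → ℝ)
    (hDt : ∀ y, Dt y = sInf {z : ℝ | ∃ u : ℝ, 1 ≤ u ∧ z = u ^ r * D (y / u)})
    (hAt : ∀ y, At y = sInf {z : ℝ | ∃ u : ℝ, 1 ≤ u ∧ z = u ^ r * A (y / u)}) :
    MeasureTheory.IntegrableOn
      (fun y => At y ^ (-ρ'') * Dt y ^ (-ρ')) (Set.Ioi 1) := by
  -- basic positivity of the exponents
  have hβ0 : 0 < β := by rw [hβ]; linarith
  have hρ''0 : 0 < ρ'' := by rw [hρ'']; exact div_pos (by linarith) hβ0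
  have hρ'0 : 0 < ρ' := by
    rw [hρ']
    refine div_pos ?_ hβ0
    rw [hβ]
    nlinarith [sq_nonneg (γ - 1), mul_pos (sub_pos.2 hpγ) (sub_pos.2 hγ)]
  have hρ0 : 0 < ρ := by rw [hρ]; exact lt_min hρ'0 hρ''0
  have hr0 : 0 < r := lt_trans (one_div_pos.2 hρ0) hr
  have hs1 : 1 < r * ρ := by
    rw [div_lt_iff₀ hρ0] at hr; linarith
  have hρle' : ρ ≤ ρ' := by rw [hρ]; exact min_le_left _ _
  have hρle'' : ρ ≤ ρ'' := by rw [hρ]; exact min_le_right _ _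
  -- global monotonicity of D and A
  have Dmono : Monotone D := by
    intro a b hab
    rcases lt_or_ge a 1 with ha | ha
    · rcases lt_or_ge b 1 with hb | hb
      · rw [hDext a ha, hDext b hb]
      · rw [hDext a ha]; exact hDmono 1 b le_rfl hb
    · exact hDmono a b ha hab
  have Amono : Monotone A := by
    intro a b hab
    rcases lt_or_ge a 1 with ha | ha
    · rcases lt_or_ge b 1 with hb | hb
      · rw [hAext a ha, hAext b hb]
      · rw [hAext a ha]; exact hAmono 1 b le_rfl hb
    · exact hAmono a b ha hab
  have D1le : ∀ x, D 1 ≤ D x := by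
    intro x
    rcases lt_or_ge x 1 with h | h
    · rw [hDext x h]
    · exact hDmono 1 x le_rfl h
  have A1le : ∀ x, A 1 ≤ A x := by
    intro x
    rcases lt_or_ge x 1 with h | h
    · rw [hAext x h]
    · exact hAmono 1 x le_rfl h
  set F : ℝ → ℝ := fun y => A y ^ (-ρ'') * D y ^ (-ρ') with hFdef
  have Fpos : ∀ y, 0 < F y := fun y =>
    mul_pos (Real.rpow_pos_of_pos (hApos y) _) (Real.rpow_pos_of_pos (hDpos y) _)
  have Fanti : Antitone F := by
    intro a b hab
    exact mul_le_mul
      (Real.rpow_le_rpow_of_nonpos (hApos a) (Amono hab) (by linarith))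
      (Real.rpow_le_rpow_of_nonpos (hDpos a) (Dmono hab) (by linarith))
      (Real.rpow_pos_of_pos (hDpos b) _).le
      (Real.rpow_pos_of_pos (hApos a) _).le
  have measF : Measurable F :=
    ((Antitone.measurable (fun a b hab =>
        Real.rpow_le_rpow_of_nonpos (hApos a) (Amono hab) (by linarith))).mul
      (Antitone.measurable (fun a b hab =>
        Real.rpow_le_rpow_of_nonpos (hDpos a) (Dmono hab) (by linarith))))
  -- basic properties of the smoothings
  have hSneD : ∀ y : ℝ, D y ∈ {z : ℝ | ∃ u : ℝ, 1 ≤ u ∧ z = u ^ r * D (y / u)} :=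
    fun y => ⟨1, le_rfl, by rw [Real.one_rpow, one_mul, div_one]⟩
  have hSneA : ∀ y : ℝ, A y ∈ {z : ℝ | ∃ u : ℝ, 1 ≤ u ∧ z = u ^ r * A (y / u)} :=
    fun y => ⟨1, le_rfl, by rw [Real.one_rpow, one_mul, div_one]⟩
  have hlbD : ∀ y : ℝ, ∀ z ∈ {z : ℝ | ∃ u : ℝ, 1 ≤ u ∧ z = u ^ r * D (y / u)}, D 1 ≤ z := by
    rintro y z ⟨u, hu, rfl⟩
    calc D 1 = 1 * D 1 := (one_mul _).symm
    _ ≤ u ^ r * D (y / u) :=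
      mul_le_mul (Real.one_le_rpow hu hr0.le) (D1le _) (hDpos 1).le
        (Real.rpow_pos_of_pos (by linarith) r).le
  have hlbA : ∀ y : ℝ, ∀ z ∈ {z : ℝ | ∃ u : ℝ, 1 ≤ u ∧ z = u ^ r * A (y / u)}, A 1 ≤ z := by
    rintro y z ⟨u, hu, rfl⟩
    calc A 1 = 1 * A 1 := (one_mul _).symm
    _ ≤ u ^ r * A (y / u) :=
      mul_le_mul (Real.one_le_rpow hu hr0.le) (A1le _) (hApos 1).le
        (Real.rpow_pos_of_pos (by linarith) r).le
  have hbddD : ∀ y : ℝ, BddBelow {z : ℝ | ∃ u : ℝ, 1 ≤ u ∧ z = u ^ r * D (y / u)} :=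
    fun y => ⟨D 1, hlbD y⟩
  have hbddA : ∀ y : ℝ, BddBelow {z : ℝ | ∃ u : ℝ, 1 ≤ u ∧ z = u ^ r * A (y / u)} :=
    fun y => ⟨A 1, hlbA y⟩
  have hDt1 : ∀ y, D 1 ≤ Dt y := fun y => by
    rw [hDt]; exact le_csInf ⟨_, hSneD y⟩ (hlbD y)
  have hAt1 : ∀ y, A 1 ≤ At y := fun y => by
    rw [hAt]; exact le_csInf ⟨_, hSneA y⟩ (hlbA y)
  have hDtpos : ∀ y, 0 < Dt y := fun y => lt_of_lt_of_le (hDpos 1) (hDt1 y)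
  have hAtpos : ∀ y, 0 < At y := fun y => lt_of_lt_of_le (hApos 1) (hAt1 y)
  have DtMono : Monotone Dt := by
    intro a b hab
    rw [hDt a, hDt b]
    refine le_csInf ⟨_, hSneD b⟩ ?_
    rintro z ⟨u, hu, rfl⟩
    have hu0 : (0:ℝ) < u := by linarith
    refine (csInf_le (hbddD a) ⟨u, hu, rfl⟩).trans ?_
    exact mul_le_mul_of_nonneg_left (Dmono (div_le_div_of_nonneg_right hab hu0.le))
      (Real.rpow_nonneg hu0.le r)
  have AtMono : Monotone At := by
    intro a b hab
    rw [hAt a, hAt b]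
    refine le_csInf ⟨_, hSneA b⟩ ?_
    rintro z ⟨u, hu, rfl⟩
    have hu0 : (0:ℝ) < u := by linarith
    refine (csInf_le (hbddA a) ⟨u, hu, rfl⟩).trans ?_
    exact mul_le_mul_of_nonneg_left (Amono (div_le_div_of_nonneg_right hab hu0.le))
      (Real.rpow_nonneg hu0.le r)
  have measT : Measurable fun y => At y ^ (-ρ'') * Dt y ^ (-ρ') :=
    ((Antitone.measurable (fun a b hab =>
        Real.rpow_le_rpow_of_nonpos (hAtpos a) (AtMono hab) (by linarith))).mul
      (Antitone.measurable (fun a b hab =>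
        Real.rpow_le_rpow_of_nonpos (hDtpos a) (DtMono hab) (by linarith))))
  -- approximate minimizers
  have approxA : ∀ y, ∃ u, 1 ≤ u ∧ u ^ r * A (y / u) < 2 * At y := by
    intro y
    have h : sInf {z : ℝ | ∃ u : ℝ, 1 ≤ u ∧ z = u ^ r * A (y / u)} < 2 * At y := by
      rw [← hAt y]; have := hAtpos y; linarith
    obtain ⟨z, ⟨u, hu, rfl⟩, hz⟩ := exists_lt_of_csInf_lt ⟨_, hSneA y⟩ h
    exact ⟨u, hu, hz⟩
  have approxD : ∀ y, ∃ u, 1 ≤ u ∧ u ^ r * D (y / u) < 2 * Dt y := by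
    intro y
    have h : sInf {z : ℝ | ∃ u : ℝ, 1 ≤ u ∧ z = u ^ r * D (y / u)} < 2 * Dt y := by
      rw [← hDt y]; have := hDtpos y; linarith
    obtain ⟨z, ⟨u, hu, rfl⟩, hz⟩ := exists_lt_of_csInf_lt ⟨_, hSneD y⟩ h
    exact ⟨u, hu, hz⟩
  set q : ℝ := (2:ℝ) ^ (-(r * ρ)) with hqdef
  have hq0 : 0 < q := Real.rpow_pos_of_pos two_pos _
  have h2q : 2 * q < 1 := by
    have h : 2 * q = (2:ℝ) ^ (1 - r * ρ) := by
      rw [hqdef, sub_eq_add_neg, Real.rpow_add two_pos, Real.rpow_one]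
    rw [h]
    exact Real.rpow_lt_one_of_one_lt_of_neg one_lt_two (by linarith)
  -- the key pointwise bound
  have key : ∀ y : ℝ, 1 < y → ∃ k : ℕ,
      At y ^ (-ρ'') * Dt y ^ (-ρ') ≤ (2:ℝ) ^ (ρ' + ρ'') * (q ^ k * F (y / 2 ^ (k + 1))) := by
    intro y hy
    have hy0 : (0:ℝ) < y := by linarith
    obtain ⟨u, hu, hua⟩ := approxA y
    obtain ⟨v, hv, hvd⟩ := approxD y
    have hu0 : (0:ℝ) < u := by linarith
    have hv0 : (0:ℝ) < v := by linarith
    -- reduce to a bound with a single dilation parameter w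
    have final : ∀ w : ℝ, 1 ≤ w →
        At y ^ (-ρ'') * Dt y ^ (-ρ') ≤ (2:ℝ) ^ (ρ' + ρ'') * (w ^ (-(r * ρ)) * F (y / w)) →
        ∃ k : ℕ, At y ^ (-ρ'') * Dt y ^ (-ρ')
          ≤ (2:ℝ) ^ (ρ' + ρ'') * (q ^ k * F (y / 2 ^ (k + 1))) := by
      intro w hw hT
      have hw0 : (0:ℝ) < w := by linarith
      set k := ⌊Real.logb 2 w⌋₊ with hkdef
      have h2k : (2:ℝ) ^ k ≤ w := by
        have h1 : ((k:ℝ)) ≤ Real.logb 2 w := Nat.floor_le (Real.logb_nonneg one_lt_two hw)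
        calc (2:ℝ) ^ k = (2:ℝ) ^ ((k:ℕ):ℝ) := (Real.rpow_natCast 2 k).symm
        _ ≤ (2:ℝ) ^ Real.logb 2 w := Real.rpow_le_rpow_of_exponent_le one_le_two h1
        _ = w := Real.rpow_logb two_pos (by norm_num) hw0
      have hk2 : w ≤ (2:ℝ) ^ (k + 1) := by
        have h1 : Real.logb 2 w ≤ ((k:ℝ) + 1) := (Nat.lt_floor_add_one _).le
        calc w = (2:ℝ) ^ Real.logb 2 w := (Real.rpow_logb two_pos (by norm_num) hw0).symm
        _ ≤ (2:ℝ) ^ ((k:ℝ) + 1) := Real.rpow_le_rpow_of_exponent_le one_le_two h1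
        _ = (2:ℝ) ^ (k + 1) := by
            rw [← Real.rpow_natCast 2 (k + 1)]; push_cast; ring_nf
      refine ⟨k, hT.trans ?_⟩
      have hwq : w ^ (-(r * ρ)) ≤ q ^ k := by
        have h1 : w ^ (-(r * ρ)) ≤ ((2:ℝ) ^ k) ^ (-(r * ρ)) :=
          Real.rpow_le_rpow_of_nonpos (by positivity) h2k
            (neg_nonpos.2 (mul_nonneg hr0.le hρ0.le))
        have h2 : ((2:ℝ) ^ k) ^ (-(r * ρ)) = q ^ k := by
          rw [← Real.rpow_natCast 2 k, ← Real.rpow_mul two_pos.le, mul_comm,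
            Real.rpow_mul two_pos.le, Real.rpow_natCast]
        linarith [h1, h2.le, h2.ge]
      have hwF : F (y / w) ≤ F (y / 2 ^ (k + 1)) :=
        Fanti (div_le_div_of_nonneg_left hy0.le hw0 hk2)
      refine mul_le_mul_of_nonneg_left ?_ (Real.rpow_nonneg two_pos.le _)
      exact mul_le_mul hwq hwF (Fpos _).le (pow_nonneg hq0.le k)
    -- the two factor bounds
    have LA : At y ^ (-ρ'') ≤ (2:ℝ) ^ ρ'' * (u ^ (-(r * ρ'')) * A (y / u) ^ (-ρ'')) := by
      have hbase : (0:ℝ) < u ^ r * A (y / u) :=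
        mul_pos (Real.rpow_pos_of_pos hu0 r) (hApos _)
      have h2 : At y ^ (-ρ'') ≤ ((u ^ r * A (y / u)) / 2) ^ (-ρ'') :=
        Real.rpow_le_rpow_of_nonpos (by positivity) (by linarith) (by linarith)
      have h3 : ((u ^ r * A (y / u)) / 2 : ℝ) ^ (-ρ'')
          = (2:ℝ) ^ ρ'' * (u ^ (-(r * ρ'')) * A (y / u) ^ (-ρ'')) := by
        rw [Real.div_rpow hbase.le two_pos.le,
          Real.mul_rpow (Real.rpow_nonneg hu0.le r) (hApos _).le,
          ← Real.rpow_mul hu0.le, mul_neg, Real.rpow_neg two_pos.le, div_eq_mul_inv, inv_inv]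
        ring
      rw [← h3]; exact h2
    have LD : Dt y ^ (-ρ') ≤ (2:ℝ) ^ ρ' * (v ^ (-(r * ρ')) * D (y / v) ^ (-ρ')) := by
      have hbase : (0:ℝ) < v ^ r * D (y / v) :=
        mul_pos (Real.rpow_pos_of_pos hv0 r) (hDpos _)
      have h2 : Dt y ^ (-ρ') ≤ ((v ^ r * D (y / v)) / 2) ^ (-ρ') :=
        Real.rpow_le_rpow_of_nonpos (by positivity) (by linarith) (by linarith)
      have h3 : ((v ^ r * D (y / v)) / 2 : ℝ) ^ (-ρ')
          = (2:ℝ) ^ ρ' * (v ^ (-(r * ρ')) * D (y / v) ^ (-ρ')) := by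
        rw [Real.div_rpow hbase.le two_pos.le,
          Real.mul_rpow (Real.rpow_nonneg hv0.le r) (hDpos _).le,
          ← Real.rpow_mul hv0.le, mul_neg, Real.rpow_neg two_pos.le, div_eq_mul_inv, inv_inv]
        ring
      rw [← h3]; exact h2
    have step1 : At y ^ (-ρ'') * Dt y ^ (-ρ')
        ≤ (2:ℝ) ^ (ρ' + ρ'') *
          (u ^ (-(r * ρ'')) * A (y / u) ^ (-ρ'') * (v ^ (-(r * ρ')) * D (y / v) ^ (-ρ'))) := by
      calc At y ^ (-ρ'') * Dt y ^ (-ρ')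
          ≤ ((2:ℝ) ^ ρ'' * (u ^ (-(r * ρ'')) * A (y / u) ^ (-ρ''))) *
            ((2:ℝ) ^ ρ' * (v ^ (-(r * ρ')) * D (y / v) ^ (-ρ'))) := by
            refine mul_le_mul LA LD (Real.rpow_pos_of_pos (hDtpos y) _).le ?_
            have := Real.rpow_pos_of_pos hu0 (-(r * ρ''))
            have := Real.rpow_pos_of_pos (hApos (y / u)) (-ρ'')
            have := Real.rpow_pos_of_pos (two_pos : (0:ℝ) < 2) ρ''
            positivity
      _ = (2:ℝ) ^ (ρ' + ρ'') *
            (u ^ (-(r * ρ'')) * A (y / u) ^ (-ρ'') * (v ^ (-(r * ρ')) * D (y / v) ^ (-ρ'))) := by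
            rw [Real.rpow_add two_pos]; ring
    rcases le_total u v with huv | hvu
    · -- v is the larger one
      refine final v hv (step1.trans (mul_le_mul_of_nonneg_left ?_ (Real.rpow_nonneg two_pos.le _)))
      have h1 : u ^ (-(r * ρ'')) ≤ 1 :=
        Real.rpow_le_one_of_one_le_of_nonpos hu (neg_nonpos.2 (mul_nonneg hr0.le hρ''0.le))
      have h2 : v ^ (-(r * ρ')) ≤ v ^ (-(r * ρ)) :=
        Real.rpow_le_rpow_of_exponent_le hv (neg_le_neg (mul_le_mul_of_nonneg_left hρle' hr0.le))
      have h3 : A (y / u) ^ (-ρ'') ≤ A (y / v) ^ (-ρ'') :=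
        Real.rpow_le_rpow_of_nonpos (hApos _)
          (Amono (div_le_div_of_nonneg_left hy0.le hu0 huv)) (by linarith)
      calc u ^ (-(r * ρ'')) * A (y / u) ^ (-ρ'') * (v ^ (-(r * ρ')) * D (y / v) ^ (-ρ'))
          ≤ 1 * A (y / v) ^ (-ρ'') * (v ^ (-(r * ρ)) * D (y / v) ^ (-ρ')) := by
            refine mul_le_mul (mul_le_mul h1 h3 (Real.rpow_pos_of_pos (hApos _) _).le
              zero_le_one) (mul_le_mul h2 le_rfl (Real.rpow_pos_of_pos (hDpos _) _).le
              (Real.rpow_nonneg hv0.le _)) ?_ ?_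
            · exact mul_nonneg (Real.rpow_nonneg hv0.le _)
                (Real.rpow_pos_of_pos (hDpos _) _).le
            · exact mul_nonneg zero_le_one (Real.rpow_pos_of_pos (hApos _) _).le
      _ = v ^ (-(r * ρ)) * F (y / v) := by rw [hFdef]; ring
    · -- u is the larger one
      refine final u hu (step1.trans (mul_le_mul_of_nonneg_left ?_ (Real.rpow_nonneg two_pos.le _)))
      have h1 : v ^ (-(r * ρ')) ≤ 1 :=
        Real.rpow_le_one_of_one_le_of_nonpos hv (neg_nonpos.2 (mul_nonneg hr0.le hρ'0.le))
      have h2 : u ^ (-(r * ρ'')) ≤ u ^ (-(r * ρ)) :=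
        Real.rpow_le_rpow_of_exponent_le hu (neg_le_neg (mul_le_mul_of_nonneg_left hρle'' hr0.le))
      have h3 : D (y / v) ^ (-ρ') ≤ D (y / u) ^ (-ρ') :=
        Real.rpow_le_rpow_of_nonpos (hDpos _)
          (Dmono (div_le_div_of_nonneg_left hy0.le hv0 hvu)) (by linarith)
      calc u ^ (-(r * ρ'')) * A (y / u) ^ (-ρ'') * (v ^ (-(r * ρ')) * D (y / v) ^ (-ρ'))
          ≤ u ^ (-(r * ρ)) * A (y / u) ^ (-ρ'') * (1 * D (y / u) ^ (-ρ')) := by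
            refine mul_le_mul (mul_le_mul h2 le_rfl (Real.rpow_pos_of_pos (hApos _) _).le
              (Real.rpow_nonneg hu0.le _)) (mul_le_mul h1 h3
              (Real.rpow_pos_of_pos (hDpos _) _).le zero_le_one) ?_ ?_
            · exact mul_nonneg (Real.rpow_nonneg hv0.le _)
                (Real.rpow_pos_of_pos (hDpos _) _).le
            · exact mul_nonneg (Real.rpow_nonneg hu0.le _)
                (Real.rpow_pos_of_pos (hApos _) _).le
      _ = u ^ (-(r * ρ)) * F (y / u) := by rw [hFdef]; ring
  -- integrability of F on (0, ∞)
  have hFIoc : IntegrableOn F (Ioc (0:ℝ) 1) := by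
    have heq : EqOn F (fun _ => F 1) (Ioc (0:ℝ) 1) := by
      intro x hx
      rcases eq_or_lt_of_le hx.2 with h | h
      · rw [h]
      · show A x ^ (-ρ'') * D x ^ (-ρ') = A 1 ^ (-ρ'') * D 1 ^ (-ρ')
        rw [hAext x h, hDext x h]
    rw [integrableOn_congr_fun heq measurableSet_Ioc]
    exact integrableOn_const measure_Ioc_lt_top.ne
  have hFIoi0 : IntegrableOn F (Ioi (0:ℝ)) := by
    have h : Ioc (0:ℝ) 1 ∪ Ioi 1 = Ioi 0 := Ioc_union_Ioi_eq_Ioi zero_le_one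
    rw [← h]
    exact hFIoc.union hint
  set I : ℝ := ∫ y in Ioi (0:ℝ), F y with hIdef
  have hI0 : 0 ≤ I := setIntegral_nonneg measurableSet_Ioi (fun x _ => (Fpos x).le)
  have hgk_int : ∀ k : ℕ, IntegrableOn (fun y => F (y / 2 ^ (k + 1))) (Ioi (1:ℝ)) := by
    intro k
    have hc : (0:ℝ) < ((2:ℝ) ^ (k + 1))⁻¹ := by positivity
    have h := (integrableOn_Ioi_comp_mul_right_iff F 1 hc).2
      (hFIoi0.mono_set (Ioi_subset_Ioi (by positivity)))
    simpa [div_eq_mul_inv] using h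
  have hgk_bound : ∀ k : ℕ, ∫ y in Ioi (1:ℝ), F (y / 2 ^ (k + 1)) ≤ 2 ^ (k + 1) * I := by
    intro k
    have hc : (0:ℝ) < ((2:ℝ) ^ (k + 1))⁻¹ := by positivity
    have h1 : ∫ y in Ioi (1:ℝ), F (y / 2 ^ (k + 1))
        = (((2:ℝ) ^ (k + 1))⁻¹)⁻¹ • ∫ x in Ioi (1 * ((2:ℝ) ^ (k + 1))⁻¹), F x := by
      rw [← integral_comp_mul_right_Ioi F 1 hc]
      simp_rw [div_eq_mul_inv]
    rw [h1, inv_inv, smul_eq_mul]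
    have h2 : ∫ x in Ioi (1 * ((2:ℝ) ^ (k + 1))⁻¹), F x ≤ I :=
      setIntegral_mono_set hFIoi0 (Eventually.of_forall fun x => (Fpos x).le)
        ((Ioi_subset_Ioi (by positivity)).eventuallyLE)
    exact mul_le_mul_of_nonneg_left h2 (by positivity)
  -- assemble
  refine ⟨measT.aestronglyMeasurable, ?_⟩
  rw [hasFiniteIntegral_iff_norm]
  have measg : ∀ k : ℕ, Measurable fun y : ℝ => q ^ k * F (y / 2 ^ (k + 1)) :=
    fun k => ((measF.comp (measurable_id.div_const _)).const_mul _)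
  calc ∫⁻ y in Ioi 1, ENNReal.ofReal ‖At y ^ (-ρ'') * Dt y ^ (-ρ')‖
      ≤ ∫⁻ y in Ioi 1, ENNReal.ofReal ((2:ℝ) ^ (ρ' + ρ'')) *
          ∑' k : ℕ, ENNReal.ofReal (q ^ k * F (y / 2 ^ (k + 1))) := by
        refine lintegral_mono_ae ?_
        rw [ae_restrict_iff' measurableSet_Ioi]
        refine Eventually.of_forall fun y hy => ?_
        obtain ⟨k, hk⟩ := key y hy
        have hTnn : 0 ≤ At y ^ (-ρ'') * Dt y ^ (-ρ') :=
          mul_nonneg (Real.rpow_pos_of_pos (hAtpos y) _).le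
            (Real.rpow_pos_of_pos (hDtpos y) _).le
        rw [Real.norm_of_nonneg hTnn]
        calc ENNReal.ofReal (At y ^ (-ρ'') * Dt y ^ (-ρ'))
            ≤ ENNReal.ofReal ((2:ℝ) ^ (ρ' + ρ'') * (q ^ k * F (y / 2 ^ (k + 1)))) :=
              ENNReal.ofReal_le_ofReal hk
        _ = ENNReal.ofReal ((2:ℝ) ^ (ρ' + ρ'')) *
              ENNReal.ofReal (q ^ k * F (y / 2 ^ (k + 1))) :=
              ENNReal.ofReal_mul (Real.rpow_nonneg two_pos.le _)
        _ ≤ _ := mul_le_mul_right (ENNReal.le_tsum k) _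
  _ = ENNReal.ofReal ((2:ℝ) ^ (ρ' + ρ'')) *
        ∑' k : ℕ, ∫⁻ y in Ioi 1, ENNReal.ofReal (q ^ k * F (y / 2 ^ (k + 1))) := by
        rw [lintegral_const_mul _ (Measurable.ennreal_tsum fun k => (measg k).ennreal_ofReal),
          lintegral_tsum fun k => ((measg k).ennreal_ofReal).aemeasurable]
  _ < ⊤ := by
        have hterm : ∀ k : ℕ, ∫⁻ y in Ioi 1, ENNReal.ofReal (q ^ k * F (y / 2 ^ (k + 1)))
            ≤ ENNReal.ofReal (2 * I * (2 * q) ^ k) := by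
          intro k
          have hint_k : Integrable (fun y => q ^ k * F (y / 2 ^ (k + 1)))
              (volume.restrict (Ioi (1:ℝ))) := (hgk_int k).const_mul _
          rw [← ofReal_integral_eq_lintegral_ofReal hint_k
            (Eventually.of_forall fun y => mul_nonneg (pow_nonneg hq0.le k) (Fpos _).le)]
          apply ENNReal.ofReal_le_ofReal
          rw [integral_const_mul]
          calc q ^ k * ∫ y in Ioi (1:ℝ), F (y / 2 ^ (k + 1))
              ≤ q ^ k * (2 ^ (k + 1) * I) :=
                mul_le_mul_of_nonneg_left (hgk_bound k) (pow_nonneg hq0.le k)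
          _ = 2 * I * (2 * q) ^ k := by rw [mul_pow, pow_succ]; ring
        have hsum : Summable (fun k : ℕ => 2 * I * (2 * q) ^ k) :=
          (summable_geometric_of_lt_one (by positivity) h2q).mul_left _
        calc ENNReal.ofReal ((2:ℝ) ^ (ρ' + ρ'')) *
              ∑' k : ℕ, ∫⁻ y in Ioi 1, ENNReal.ofReal (q ^ k * F (y / 2 ^ (k + 1)))
            ≤ ENNReal.ofReal ((2:ℝ) ^ (ρ' + ρ'')) *
              ∑' k : ℕ, ENNReal.ofReal (2 * I * (2 * q) ^ k) :=
              mul_le_mul_right (ENNReal.tsum_le_tsum hterm) _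
        _ = ENNReal.ofReal ((2:ℝ) ^ (ρ' + ρ'')) *
              ENNReal.ofReal (∑' k : ℕ, 2 * I * (2 * q) ^ k) := by
              rw [← ENNReal.ofReal_tsum_of_nonneg
                (fun k => mul_nonneg (by linarith) (pow_nonneg (by positivity) k)) hsum]
        _ < ⊤ := ENNReal.mul_lt_top ENNReal.ofReal_lt_top ENNReal.ofReal_lt_top
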